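/- Let x ∈ (0,1] and let (k_N)_{N≥1} be a sequence of integers with 1 ≤ k_N ≤ N and k_N/N → x as N → ∞. Then (k_N/N²)( 1 + k_N − N + 2N(H_{N−1} − H_{k_N−1}) ) → x² − 2x·log x − x as N → ∞, where H_n = Σ_{j=1}^{n} 1/j (H_0 = 0). -/

import Mathlib

open Filter Topology

/-- The `n`-th harmonic number `H_n = Σ_{j=1}^{n} 1/j` (with `H_0 = 0`), as a real number. -/
noncomputable def harm (n : ℕ) : ℝ := ∑ j ∈ Finset.Icc 1 n, (1 : ℝ) / j

lemma harm_eq (n : ℕ) : harm n = (harmonic n : ℝ) := by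
  rw [harm, harmonic_eq_sum_Icc]
  push_cast
  simp [one_div]

lemma tendsto_harm_sub_log :
    Filter.Tendsto (fun n : ℕ => harm n - Real.log n) atTop
      (𝓝 Real.eulerMascheroniConstant) := by
  simpa [harm_eq] using Real.tendsto_harmonic_sub_log

/-- If `k_N/N → x ∈ (0,1]`, then `φ_N(k_N,1) → x² − 2x log x − x`. -/
theorem phi_one_tendsto (x : ℝ) (hx : x ∈ Set.Ioc (0 : ℝ) 1) (k : ℕ → ℕ)
    (hk : ∀ N : ℕ, 1 ≤ N → 1 ≤ k N ∧ k N ≤ N)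
    (hlim : Tendsto (fun N : ℕ => (k N : ℝ) / N) atTop (𝓝 x)) :
    Tendsto
      (fun N : ℕ => ((k N : ℝ) / (N : ℝ) ^ 2) *
        (1 + (k N : ℝ) - N + 2 * (N : ℝ) * (harm (N - 1) - harm (k N - 1))))
      atTop (𝓝 (x ^ 2 - 2 * x * Real.log x - x)) := by
  obtain ⟨hx0, hx1⟩ := hx
  -- k N → ∞
  have hkR : Tendsto (fun N : ℕ => (k N : ℝ)) atTop atTop := by
    have h1 : Tendsto (fun N : ℕ => ((k N : ℝ) / N) * N) atTop atTop :=
      Tendsto.pos_mul_atTop hx0 hlim tendsto_natCast_atTop_atTop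
    refine h1.congr' ?_
    filter_upwards [eventually_ge_atTop 1] with N hN
    have : (N : ℝ) ≠ 0 := by positivity
    field_simp
  have hkN : Tendsto k atTop atTop := by
    rwa [← tendsto_natCast_atTop_iff (R := ℝ)]
  have hkN1 : Tendsto (fun N => k N - 1) atTop atTop :=
    (tendsto_sub_atTop_nat 1).comp hkN
  have hN1 : Tendsto (fun N : ℕ => N - 1) atTop atTop :=
    tendsto_sub_atTop_nat 1
  set d : ℕ → ℝ := fun n => harm n - Real.log n with hd
  have hdγ := tendsto_harm_sub_log
  -- difference of the d-terms tends to 0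
  have hdiff0 : Tendsto (fun N : ℕ => d (N - 1) - d (k N - 1)) atTop (𝓝 0) := by
    have h1 : Tendsto (fun N : ℕ => d (N - 1)) atTop (𝓝 Real.eulerMascheroniConstant) :=
      hdγ.comp hN1
    have h2 : Tendsto (fun N : ℕ => d (k N - 1)) atTop (𝓝 Real.eulerMascheroniConstant) :=
      hdγ.comp hkN1
    simpa using h1.sub h2
  -- ratio (N-1)/(k N - 1) → 1/x
  have hNk : Tendsto (fun N : ℕ => ((N : ℝ) - 1) / ((k N : ℝ) - 1)) atTop (𝓝 (1 / x)) := by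
    have hinv : Tendsto (fun N : ℕ => (N : ℝ) / (k N)) atTop (𝓝 (1 / x)) := by
      have h := hlim.inv₀ (ne_of_gt hx0)
      simp only [inv_div] at h
      simpa [one_div] using h
    have hA : Tendsto (fun N : ℕ => ((N : ℝ) - 1) / N) atTop (𝓝 1) := by
      have h1 : Tendsto (fun N : ℕ => 1 - 1 / (N : ℝ)) atTop (𝓝 (1 - 0)) :=
        tendsto_const_nhds.sub (tendsto_one_div_atTop_nhds_zero_nat)
      rw [sub_zero] at h1
      refine h1.congr' ?_
      filter_upwards [eventually_ge_atTop 1] with N hN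
      have : (N : ℝ) ≠ 0 := by positivity
      field_simp
    have hB : Tendsto (fun N : ℕ => (k N : ℝ) / ((k N : ℝ) - 1)) atTop (𝓝 1) := by
      have h1 : Tendsto (fun n : ℕ => (n : ℝ) / ((n : ℝ) - 1)) atTop (𝓝 1) := by
        have h2 : Tendsto (fun y : ℝ => y / (y - 1)) atTop (𝓝 1) := by
          -- y/(y-1) = 1 + 1/(y-1)
          have h3 : Tendsto (fun y : ℝ => 1 + (y + -1)⁻¹) atTop (𝓝 (1 + 0)) :=
            tendsto_const_nhds.add (tendsto_inv_atTop_zero.comp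
              (tendsto_atTop_add_const_right _ (-1) tendsto_id))
          rw [add_zero] at h3
          refine h3.congr' ?_
          filter_upwards [eventually_ge_atTop (2 : ℝ)] with y hy
          have h4 : y - 1 ≠ 0 := by linarith
          rw [show y + -1 = y - 1 by ring, eq_div_iff h4, add_mul, one_mul,
            inv_mul_cancel₀ h4]
          ring
        exact h2.comp tendsto_natCast_atTop_atTop
      exact h1.comp hkN
    have hprod := (hA.mul hinv).mul hB
    rw [show (1 : ℝ) * (1 / x) * 1 = 1 / x by ring] at hprod
    refine hprod.congr' ?_
    filter_upwards [eventually_ge_atTop 1, hkN.eventually_ge_atTop 2] with N hN hkN2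
    have hN0 : (N : ℝ) ≠ 0 := by positivity
    have hk0 : (k N : ℝ) ≠ 0 := by
      have : (1 : ℕ) ≤ k N := le_trans (by norm_num) hkN2
      positivity
    have hk1 : (k N : ℝ) - 1 ≠ 0 := by
      have : (2 : ℝ) ≤ (k N : ℝ) := by exact_mod_cast hkN2
      intro h; linarith
    field_simp
  -- harm difference → -log x
  have hlog : Tendsto (fun N : ℕ => harm (N - 1) - harm (k N - 1)) atTop (𝓝 (-Real.log x)) := by
    have hloglim : Tendsto (fun N : ℕ => Real.log (((N : ℝ) - 1) / ((k N : ℝ) - 1))) atTop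
        (𝓝 (Real.log (1 / x))) :=
      ((Real.continuousAt_log (by positivity)).tendsto).comp hNk
    have hsum := hdiff0.add hloglim
    rw [zero_add, Real.log_div one_ne_zero (ne_of_gt hx0), Real.log_one, zero_sub] at hsum
    refine hsum.congr' ?_
    filter_upwards [eventually_ge_atTop 2, hkN.eventually_ge_atTop 2] with N hN hkN2
    have hN1' : ((N - 1 : ℕ) : ℝ) = (N : ℝ) - 1 := by
      have : (1 : ℕ) ≤ N := le_trans (by norm_num) hN
      push_cast [this]; ring
    have hk1' : ((k N - 1 : ℕ) : ℝ) = (k N : ℝ) - 1 := by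
      have : (1 : ℕ) ≤ k N := le_trans (by norm_num) hkN2
      push_cast [this]; ring
    have hN1pos : (0 : ℝ) < (N : ℝ) - 1 := by
      have : (2 : ℝ) ≤ (N : ℝ) := by exact_mod_cast hN
      linarith
    have hk1pos : (0 : ℝ) < (k N : ℝ) - 1 := by
      have : (2 : ℝ) ≤ (k N : ℝ) := by exact_mod_cast hkN2
      linarith
    simp only [hd]
    rw [hN1', hk1', Real.log_div (ne_of_gt hN1pos) (ne_of_gt hk1pos)]
    ring
  -- main combination
  have hmain : Tendsto
      (fun N : ℕ => ((k N : ℝ) / N) * ((1 + (k N : ℝ) - N) / N)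
        + 2 * ((k N : ℝ) / N) * (harm (N - 1) - harm (k N - 1)))
      atTop (𝓝 (x * (x - 1) + 2 * x * (-Real.log x))) := by
    have h2 : Tendsto (fun N : ℕ => (1 + (k N : ℝ) - N) / N) atTop (𝓝 (x - 1)) := by
      have h3 : Tendsto (fun N : ℕ => 1 / (N : ℝ) + (k N : ℝ) / N - 1) atTop
          (𝓝 (0 + x - 1)) :=
        (tendsto_one_div_atTop_nhds_zero_nat.add hlim).sub tendsto_const_nhds
      rw [zero_add] at h3
      refine h3.congr' ?_
      filter_upwards [eventually_ge_atTop 1] with N hN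
      have : (N : ℝ) ≠ 0 := by positivity
      field_simp
    exact (hlim.mul h2).add (((hlim.const_mul 2).mul hlog))
  have : x * (x - 1) + 2 * x * (-Real.log x) = x ^ 2 - 2 * x * Real.log x - x := by ring
  rw [this] at hmain
  refine hmain.congr' ?_
  filter_upwards [eventually_ge_atTop 1] with N hN
  have hN0 : (N : ℝ) ≠ 0 := by positivity
  field_simp
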